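/- Let p be a prime and let f(x) = ∑_{k≥0} f_k x^k ∈ ℤ_p[[x]] be a power series with constant term f_0 = 1. Then the coefficients c_k of the power series x·f'(x)/f(x) = ∑_{k≥1} c_k x^k are p-adic integers and satisfy c_{mp^r} ≡ c_{mp^{r-1}} (mod p^r) for all m ≥ 1 and r ≥ 1. -/

import Mathlib

open PowerSeries Finset

namespace GaussCongAux

variable {p : ℕ} [Fact p.Prime]

lemma fermat_padic (a : ℤ_[p]) : (p : ℤ_[p]) ∣ a ^ p - a := by
  have h : PadicInt.toZMod (a ^ p - a) = 0 := by
    rw [map_sub, map_pow, ZMod.pow_card, sub_self]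
  rwa [← Ideal.mem_span_singleton, ← PadicInt.maximalIdeal_eq_span_p,
    ← PadicInt.ker_toZMod, RingHom.mem_ker]

lemma coeff_derivativeFun' (f : PowerSeries ℤ_[p]) (n : ℕ) :
    coeff n f.derivativeFun = coeff (n + 1) f * (n + 1) :=
  coeff_derivative f n

/-- The logarithmic derivative series of a single factor `1 - β X^d`. -/
noncomputable def U (d : ℕ) (β : ℤ_[p]) : PowerSeries ℤ_[p] :=
  PowerSeries.mk fun k => if d ∣ k ∧ k ≠ 0 then -((d : ℤ_[p]) * β ^ (k / d)) else 0

lemma factor_eq (d : ℕ) (hd : 0 < d) (β : ℤ_[p]) :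
    (1 - C (R := ℤ_[p]) β * X ^ d) * U d β = X * derivativeFun (1 - C (R := ℤ_[p]) β * X ^ d) := by
  have hrw : (1 - C (R := ℤ_[p]) β * X ^ d) * U d β
      = U d β - C (R := ℤ_[p]) β * (X ^ d * U d β) := by ring
  ext n
  rw [hrw]
  cases n with
  | zero =>
      rw [coeff_zero_X_mul, map_sub, coeff_C_mul, coeff_X_pow_mul']
      simp [U, hd.ne']
  | succ j =>
      rw [coeff_succ_X_mul, coeff_derivativeFun', map_sub, coeff_C_mul, coeff_X_pow_mul',
        map_sub, coeff_one, coeff_C_mul, coeff_X_pow]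
      simp only [U, coeff_mk]
      by_cases h2 : j + 1 = d
      · subst h2
        have h1 : (j + 1) ∣ (j + 1) := dvd_rfl
        simp [h1, Nat.div_self (Nat.succ_pos j)]
        ring
      · by_cases h1 : d ∣ (j + 1)
        · have hle : d ≤ j + 1 := Nat.le_of_dvd (Nat.succ_pos j) h1
          have hlt : d < j + 1 := lt_of_le_of_ne hle (fun h => h2 h.symm)
          have h3 : d ∣ (j + 1 - d) := Nat.dvd_sub h1 dvd_rfl
          have h4 : (j + 1) / d = (j + 1 - d) / d + 1 := by
            rw [← Nat.add_div_right _ hd, Nat.sub_add_cancel hle]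
          have h5 : j + 1 - d ≠ 0 := by omega
          simp [h1, h2, h3, hle, h5, h4, pow_succ]
          ring
        · by_cases hle : d ≤ j + 1
          · have h6 : ¬ (d ∣ (j + 1 - d)) := by
              intro h
              exact h1 (by
                have := Nat.dvd_add h (dvd_refl d)
                rwa [Nat.sub_add_cancel hle] at this)
            simp [h1, h2, h6, hle]
          · simp [h1, h2, hle]

/-- Partial products approximating `f`. -/
noncomputable def Q (f : PowerSeries ℤ_[p]) : ℕ → PowerSeries ℤ_[p]
  | 0 => 1
  | n + 1 => Q f n *
      (1 - C (R := ℤ_[p]) (coeff (R := ℤ_[p]) (n + 1) (Q f n) - coeff (R := ℤ_[p]) (n + 1) f) * X ^ (n + 1))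

noncomputable def beta (f : PowerSeries ℤ_[p]) (n : ℕ) : ℤ_[p] :=
  coeff (R := ℤ_[p]) n (Q f (n - 1)) - coeff (R := ℤ_[p]) n f

lemma Q_succ (f : PowerSeries ℤ_[p]) (n : ℕ) :
    Q f (n + 1) = Q f n * (1 - C (R := ℤ_[p]) (beta f (n + 1)) * X ^ (n + 1)) := rfl

lemma constCoeff_Q (f : PowerSeries ℤ_[p]) (n : ℕ) :
    constantCoeff (R := ℤ_[p]) (Q f n) = 1 := by
  induction n with
  | zero => simp [Q]
  | succ n ih => simp [Q_succ, ih, map_sub, map_mul, map_pow, constantCoeff_X]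

lemma coeff_Q_small (f : PowerSeries ℤ_[p]) (n k : ℕ) (hk : k ≤ n) :
    coeff (R := ℤ_[p]) k (Q f (n + 1)) = coeff (R := ℤ_[p]) k (Q f n) := by
  rw [Q_succ, mul_sub, mul_one, map_sub, ← mul_assoc, coeff_mul_X_pow',
    if_neg (by omega), sub_zero]

lemma coeff_Q_eq (f : PowerSeries ℤ_[p]) :
    ∀ n k, 1 ≤ k → k ≤ n → coeff (R := ℤ_[p]) k (Q f n) = coeff (R := ℤ_[p]) k f := by
  intro n
  induction n with
  | zero => intro k h1 h2; omega
  | succ n ih =>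
      intro k h1 h2
      rcases Nat.lt_or_ge k (n + 1) with h | h
      · rw [coeff_Q_small f n k (by omega), ih k h1 (by omega)]
      · have hk : k = n + 1 := by omega
        subst hk
        rw [Q_succ, mul_sub, mul_one, map_sub, ← mul_assoc, coeff_mul_X_pow',
          if_pos le_rfl, Nat.sub_self, coeff_zero_eq_constantCoeff_apply, map_mul,
          constCoeff_Q, one_mul, constantCoeff_C, beta]
        simp

/-- Sum of log derivatives of factors. -/
noncomputable def Glog (f : PowerSeries ℤ_[p]) (n : ℕ) : PowerSeries ℤ_[p] :=
  ∑ d ∈ Finset.Icc 1 n, U d (beta f d)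

lemma logderiv_mul (a b u v : PowerSeries ℤ_[p]) (ha : a * u = X * a.derivativeFun)
    (hb : b * v = X * b.derivativeFun) :
    (a * b) * (u + v) = X * (a * b).derivativeFun := by
  rw [derivativeFun_mul, smul_eq_mul, smul_eq_mul]
  linear_combination b * ha + a * hb

lemma Q_logderiv (f : PowerSeries ℤ_[p]) (n : ℕ) :
    Q f n * Glog f n = X * (Q f n).derivativeFun := by
  induction n with
  | zero =>
      show (1 : PowerSeries ℤ_[p]) * Glog f 0 = X * derivativeFun 1
      rw [derivativeFun_one, mul_zero, Glog]
      simp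
  | succ n ih =>
      have hG : Glog f (n + 1) = Glog f n + U (n + 1) (beta f (n + 1)) := by
        rw [Glog, Glog, ← Finset.sum_Icc_succ_top (by omega)]
      rw [Q_succ, hG]
      exact logderiv_mul _ _ _ _ ih (factor_eq (n + 1) (Nat.succ_pos n) _)

lemma coeff_Glog (f : PowerSeries ℤ_[p]) (n k : ℕ) (hk1 : 1 ≤ k) (hkn : k ≤ n) :
    coeff (R := ℤ_[p]) k (Glog f n) = -∑ d ∈ k.divisors, (d : ℤ_[p]) * beta f d ^ (k / d) := by
  rw [Glog, map_sum]
  have hcoeff : ∀ d, coeff (R := ℤ_[p]) k (U d (beta f d)) =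
      if d ∣ k then -((d : ℤ_[p]) * beta f d ^ (k / d)) else 0 := by
    intro d
    rw [U, coeff_mk]
    simp [Nat.one_le_iff_ne_zero.mp hk1]
  simp_rw [hcoeff]
  rw [← Finset.sum_filter]
  have hset : (Finset.Icc 1 n).filter (· ∣ k) = k.divisors := by
    ext d
    simp only [Finset.mem_filter, Finset.mem_Icc, Nat.mem_divisors]
    constructor
    · rintro ⟨⟨hd1, hd2⟩, hdk⟩
      exact ⟨hdk, by omega⟩
    · rintro ⟨hdk, -⟩
      have hd1 : 0 < d := Nat.pos_of_dvd_of_pos hdk (by omega)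
      exact ⟨⟨hd1, le_trans (Nat.le_of_dvd (by omega) hdk) hkn⟩, hdk⟩
  rw [hset, Finset.sum_neg_distrib]

lemma coeff_zero_logderiv (f g : PowerSeries ℤ_[p])
    (hf : constantCoeff (R := ℤ_[p]) f = 1) (hg : f * g = X * f.derivativeFun) :
    coeff (R := ℤ_[p]) 0 g = 0 := by
  have h := congrArg (constantCoeff (R := ℤ_[p])) hg
  rw [map_mul, map_mul, hf, one_mul, constantCoeff_X, zero_mul] at h
  rw [coeff_zero_eq_constantCoeff_apply, h]

lemma coeff_succ_logderiv (f g : PowerSeries ℤ_[p])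
    (hf : constantCoeff (R := ℤ_[p]) f = 1) (hg : f * g = X * f.derivativeFun) (k : ℕ) :
    coeff (R := ℤ_[p]) (k + 1) g = coeff (R := ℤ_[p]) (k + 1) f * (k + 1)
      - ∑ i ∈ Finset.range (k + 1), coeff (R := ℤ_[p]) (i + 1) f * coeff (R := ℤ_[p]) (k - i) g := by
  have h := congrArg (coeff (R := ℤ_[p]) (k + 1)) hg
  rw [coeff_succ_X_mul, coeff_derivativeFun', coeff_mul,
    Finset.Nat.sum_antidiagonal_eq_sum_range_succ_mk, Finset.sum_range_succ'] at h
  simp only [Nat.succ_sub_succ_eq_sub, Nat.sub_zero,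
    coeff_zero_eq_constantCoeff_apply, hf, one_mul] at h
  linear_combination h

lemma coeff_unique (f g F G : PowerSeries ℤ_[p])
    (hf : constantCoeff (R := ℤ_[p]) f = 1) (hF : constantCoeff (R := ℤ_[p]) F = 1)
    (hg : f * g = X * f.derivativeFun) (hG : F * G = X * F.derivativeFun) (N : ℕ)
    (hc : ∀ k, k ≤ N → coeff (R := ℤ_[p]) k f = coeff (R := ℤ_[p]) k F) :
    ∀ k, k ≤ N → coeff (R := ℤ_[p]) k g = coeff (R := ℤ_[p]) k G := by
  intro k
  induction k using Nat.strong_induction_on with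
  | _ k ih =>
    intro hk
    match k with
    | 0 => rw [coeff_zero_logderiv f g hf hg, coeff_zero_logderiv F G hF hG]
    | j + 1 =>
        rw [coeff_succ_logderiv f g hf hg, coeff_succ_logderiv F G hF hG, hc _ hk]
        congr 1
        apply Finset.sum_congr rfl
        intro i hi
        rw [Finset.mem_range] at hi
        rw [hc (i + 1) (by omega), ih (j - i) (by omega) (by omega)]

lemma key_nt (β : ℕ → ℤ_[p]) (m r : ℕ) (hm : 1 ≤ m) (hr : 1 ≤ r) :
    ((p : ℤ_[p])) ^ r ∣
      (∑ d ∈ (m * p ^ r).divisors, (d : ℤ_[p]) * β d ^ (m * p ^ r / d))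
      - ∑ d ∈ (m * p ^ (r - 1)).divisors, (d : ℤ_[p]) * β d ^ (m * p ^ (r - 1) / d) := by
  have hp : p.Prime := Fact.out
  have hppos : 0 < p := hp.pos
  have hA0 : m * p ^ r ≠ 0 := Nat.mul_ne_zero (by omega) (pow_pos hppos r).ne'
  have hB0 : m * p ^ (r - 1) ≠ 0 := Nat.mul_ne_zero (by omega) (pow_pos hppos _).ne'
  have hBA : (m * p ^ (r - 1)).divisors ⊆ (m * p ^ r).divisors :=
    Nat.divisors_subset_of_dvd hA0 (mul_dvd_mul_left m (pow_dvd_pow p (by omega)))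
  rw [← Finset.sum_sdiff hBA, add_sub_assoc, ← Finset.sum_sub_distrib]
  refine dvd_add (Finset.dvd_sum ?_) (Finset.dvd_sum ?_)
  · intro d hd
    rw [Finset.mem_sdiff] at hd
    obtain ⟨hdA, hdB⟩ := hd
    have hddvd : d ∣ m * p ^ r := (Nat.mem_divisors.mp hdA).1
    have hd0 : d ≠ 0 := (Nat.pos_of_mem_divisors hdA).ne'
    have hjr : p ^ r ∣ d := by
      rcases le_or_gt r (d.factorization p) with h | h
      · exact dvd_trans (pow_dvd_pow p h) (Nat.ordProj_dvd d p)
      · exfalso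
        apply hdB
        refine Nat.mem_divisors.mpr ⟨?_, hB0⟩
        have he : ordCompl[p] d ∣ m := by
          have h1 : ordCompl[p] d ∣ m * p ^ r := (Nat.ordCompl_dvd d p).trans hddvd
          exact Nat.Coprime.dvd_of_dvd_mul_right
            (((Nat.coprime_ordCompl hp hd0).symm).pow_right r) h1
        calc d = p ^ (d.factorization p) * ordCompl[p] d :=
              (Nat.ordProj_mul_ordCompl_eq_self d p).symm
          _ ∣ p ^ (r - 1) * m :=
              mul_dvd_mul (pow_dvd_pow p (by omega)) he
          _ = m * p ^ (r - 1) := mul_comm _ _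
    have hcast : ((p : ℤ_[p])) ^ r ∣ (d : ℤ_[p]) := by
      have := (Nat.cast_dvd_cast (α := ℤ_[p]) hjr)
      rwa [Nat.cast_pow] at this
    exact hcast.mul_right _
  · intro d hd
    have hdvd : d ∣ m * p ^ (r - 1) := (Nat.mem_divisors.mp hd).1
    have hd0 : d ≠ 0 := (Nat.pos_of_mem_divisors hd).ne'
    rw [← mul_sub]
    set j := d.factorization p with hj
    rcases le_or_gt r j with h | h
    · have hcast : ((p : ℤ_[p])) ^ r ∣ (d : ℤ_[p]) := by
        have hjr : p ^ r ∣ d := dvd_trans (pow_dvd_pow p h) (Nat.ordProj_dvd d p)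
        have := (Nat.cast_dvd_cast (α := ℤ_[p]) hjr)
        rwa [Nat.cast_pow] at this
      exact hcast.mul_right _
    · have hj1 : j ≤ r - 1 := by omega
      have he : ordCompl[p] d ∣ m := by
        have h1 : ordCompl[p] d ∣ m * p ^ (r - 1) := (Nat.ordCompl_dvd d p).trans hdvd
        exact Nat.Coprime.dvd_of_dvd_mul_right
          (((Nat.coprime_ordCompl hp hd0).symm).pow_right _) h1
      set N1 := m * p ^ (r - 1) / d with hN1def
      have hdN1 : d * N1 = m * p ^ (r - 1) := Nat.mul_div_cancel' hdvd
      have hpN1 : p ^ (r - 1 - j) ∣ N1 := by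
        have hpow : p ^ (r - 1) = p ^ j * p ^ (r - 1 - j) := by
          rw [← pow_add]; congr 1; omega
        have h2 : p ^ j * (ordCompl[p] d * N1) = p ^ j * (m * p ^ (r - 1 - j)) := by
          rw [← mul_assoc, Nat.ordProj_mul_ordCompl_eq_self, hdN1, hpow]
          ring
        have h3 : ordCompl[p] d * N1 = m * p ^ (r - 1 - j) :=
          Nat.eq_of_mul_eq_mul_left (pow_pos hppos j) h2
        have h4 : p ^ (r - 1 - j) ∣ ordCompl[p] d * N1 := ⟨m, by rw [h3]; ring⟩
        exact ((Nat.coprime_ordCompl hp hd0).pow_left _).dvd_of_dvd_mul_left h4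
      obtain ⟨M, hM⟩ := hpN1
      have hexpB : N1 = M * p ^ (r - 1 - j) := by
        rw [hM]; ring
      have hexpA : m * p ^ r / d = (p * M) * p ^ (r - 1 - j) := by
        have h1 : m * p ^ r = d * (p * N1) := by
          rw [show r = (r - 1) + 1 by omega, pow_succ, ← mul_assoc, ← hdN1]; ring
        rw [h1, Nat.mul_div_cancel_left _ (Nat.pos_of_ne_zero hd0), hM]; ring
      rw [hexpA, hexpB, pow_mul (β d) (p * M), pow_mul (β d) M]
      have hferm : (p : ℤ_[p]) ∣ (β d) ^ (p * M) - (β d) ^ M := by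
        have h5 := fermat_padic ((β d) ^ M)
        rwa [← pow_mul, mul_comm M p] at h5
      have hmain := dvd_sub_pow_of_dvd_sub hferm (r - 1 - j)
      have hdj : ((p : ℤ_[p])) ^ j ∣ (d : ℤ_[p]) := by
        have := (Nat.cast_dvd_cast (α := ℤ_[p]) (Nat.ordProj_dvd d p))
        rwa [Nat.cast_pow] at this
      have hsplit : ((p : ℤ_[p])) ^ r = (p : ℤ_[p]) ^ j * (p : ℤ_[p]) ^ ((r - 1 - j) + 1) := by
        rw [← pow_add]; congr 1; omega
      rw [hsplit]
      exact mul_dvd_mul hdj hmain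

end GaussCongAux

open GaussCongAux in
/-- If `f ∈ ℤ_p[[x]]` has constant term 1 and `g = x·f'/f` (i.e. `f * g = x·f'`),
then the coefficients of `g` satisfy the Gauss congruences for `p`. -/
theorem logDeriv_gauss_congruence (p : ℕ) [Fact p.Prime]
    (f g : PowerSeries ℤ_[p]) (hf : PowerSeries.constantCoeff (R := ℤ_[p]) f = 1)
    (hg : f * g = PowerSeries.X * f.derivativeFun)
    (m r : ℕ) (hm : 1 ≤ m) (hr : 1 ≤ r) :
    ((p : ℤ_[p])) ^ r ∣
      PowerSeries.coeff (R := ℤ_[p]) (m * p ^ r) g - PowerSeries.coeff (R := ℤ_[p]) (m * p ^ (r - 1)) g := by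
  have hp : p.Prime := Fact.out
  have hppos : 0 < p := hp.pos
  set N := m * p ^ r with hN
  have hNpos : 1 ≤ N := Nat.one_le_iff_ne_zero.mpr
    (Nat.mul_ne_zero (by omega) (pow_pos hppos r).ne')
  have hBpos : 1 ≤ m * p ^ (r - 1) := Nat.one_le_iff_ne_zero.mpr
    (Nat.mul_ne_zero (by omega) (pow_pos hppos _).ne')
  have hle : m * p ^ (r - 1) ≤ N :=
    Nat.mul_le_mul_left m (Nat.pow_le_pow_right hppos (by omega))
  have hc : ∀ k, k ≤ N → PowerSeries.coeff (R := ℤ_[p]) k f = PowerSeries.coeff (R := ℤ_[p]) k (Q f N) := by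
    intro k hk
    match k with
    | 0 =>
        rw [PowerSeries.coeff_zero_eq_constantCoeff_apply,
          PowerSeries.coeff_zero_eq_constantCoeff_apply, hf, constCoeff_Q]
    | j + 1 => exact (coeff_Q_eq f N (j + 1) (by omega) hk).symm
  have huniq := coeff_unique f g (Q f N) (Glog f N) hf (constCoeff_Q f N) hg
    (Q_logderiv f N) N hc
  rw [huniq N le_rfl, huniq _ hle, coeff_Glog f N N hNpos le_rfl,
    coeff_Glog f N _ hBpos hle, neg_sub_neg, dvd_sub_comm]
  exact key_nt (beta f) m r hm hr
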